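/- For every positive integer n, the only 321-avoiding involution of length n that has a unique longest increasing subsequence is the identity permutation; consequently i_n(321) = 1 for all n ≥ 1. -/

import Mathlib

/-- `s` is the index set of an increasing subsequence of the word `f`. -/
def IsIncSubseq {n : ℕ} {α : Type*} [Preorder α] (f : Fin n → α) (s : Finset (Fin n)) : Prop :=
  ∀ i ∈ s, ∀ j ∈ s, i < j → f i < f j

/-- `f` has a unique longest increasing subsequence. -/
def HasULIS {n : ℕ} {α : Type*} [Preorder α] (f : Fin n → α) : Prop :=
  ∃! s : Finset (Fin n), IsIncSubseq f s ∧
    ∀ t : Finset (Fin n), IsIncSubseq f t → t.card ≤ s.card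

/-- `p` contains the pattern `q`. -/
def Contains {k n : ℕ} (q : Equiv.Perm (Fin k)) (p : Equiv.Perm (Fin n)) : Prop :=
  ∃ f : Fin k → Fin n, StrictMono f ∧ ∀ a b : Fin k, p (f a) < p (f b) ↔ q a < q b

/-- `p` avoids the pattern `q`. -/
def Avoids {k n : ℕ} (q : Equiv.Perm (Fin k)) (p : Equiv.Perm (Fin n)) : Prop :=
  ¬ Contains q p

def pattern321 : Equiv.Perm (Fin 3) := ⟨![2,1,0], ![2,1,0], by decide, by decide⟩
def pattern231 : Equiv.Perm (Fin 3) := ⟨![1,2,0], ![2,0,1], by decide, by decide⟩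
def pattern132 : Equiv.Perm (Fin 3) := ⟨![0,2,1], ![0,2,1], by decide, by decide⟩
def pattern123 : Equiv.Perm (Fin 3) := Equiv.refl (Fin 3)

/-- the number of `q`-avoiding permutations of length `n` with a unique
longest increasing subsequence. -/
noncomputable def uNum {k : ℕ} (q : Equiv.Perm (Fin k)) (n : ℕ) : ℕ :=
  Nat.card {p : Equiv.Perm (Fin n) // Avoids q p ∧ HasULIS ⇑p}

/-- the number of `q`-avoiding involutions of length `n` with a unique
longest increasing subsequence. -/
noncomputable def iNum {k : ℕ} (q : Equiv.Perm (Fin k)) (n : ℕ) : ℕ :=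
  Nat.card {p : Equiv.Perm (Fin n) // p⁻¹ = p ∧ Avoids q p ∧ HasULIS ⇑p}

/-- A permutation is indecomposable if it cannot be cut into a (nonempty) prefix and
a (nonempty) suffix so that every entry of the prefix is smaller than every entry
of the suffix. -/
def Indecomposable {m : ℕ} (w : Equiv.Perm (Fin m)) : Prop :=
  ¬ ∃ j : ℕ, 1 ≤ j ∧ j < m ∧ ∀ a b : Fin m, (a : ℕ) < j → j ≤ (b : ℕ) → w a < w b

lemma contains321_of {n : ℕ} (p : Equiv.Perm (Fin n)) {i j k : Fin n}
    (hij : i < j) (hjk : j < k) (h1 : p j < p i) (h2 : p k < p j) :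
    Contains pattern321 p := by
  refine ⟨![i, j, k], ?_, ?_⟩
  · intro a b hab
    fin_cases a <;> fin_cases b <;>
      simp_all [Matrix.cons_val_zero, Matrix.cons_val_one] <;>
      first
        | exact hij
        | exact hjk
        | exact hij.trans hjk
        | exact absurd hab (by decide)
  · have h3 : p k < p i := h2.trans h1
    intro a b
    fin_cases a <;> fin_cases b <;>
      simp [pattern321, Matrix.cons_val_zero, Matrix.cons_val_one] <;>
      first
        | exact h1 | exact h2 | exact h3
        | exact h1.le | exact h2.le | exact h3.le
        | exact (by decide)

theorem i321_eq_one (n : ℕ) (hn : 1 ≤ n) :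
    (∀ p : Equiv.Perm (Fin n),
      (p⁻¹ = p ∧ Avoids pattern321 p ∧ HasULIS ⇑p) ↔ p = 1) ∧
    iNum pattern321 n = 1 := by
  have main : ∀ p : Equiv.Perm (Fin n),
      (p⁻¹ = p ∧ Avoids pattern321 p ∧ HasULIS ⇑p) ↔ p = 1 := by
    intro p
    constructor
    · rintro ⟨hInv, hAv, s, ⟨hsInc, hsMax⟩, huniq⟩
      have hpp : ∀ i, p (p i) = i := by
        intro i
        nth_rewrite 1 [← hInv]
        exact Equiv.symm_apply_apply p i
      -- weak excedance set
      set E : Finset (Fin n) := Finset.univ.filter (fun i => i ≤ p i) with hEdef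
      have hE : IsIncSubseq (⇑p) E := by
        intro i hi j hj hij
        have hi' : i ≤ p i := (Finset.mem_filter.mp hi).2
        have hj' : j ≤ p j := (Finset.mem_filter.mp hj).2
        by_contra hcon
        have hne : p i ≠ p j := fun h => absurd (p.injective h) hij.ne
        have h1 : p j < p i := lt_of_le_of_ne (not_lt.mp hcon) hne.symm
        have hjpi : j < p i := lt_of_le_of_lt hj' h1
        have h2 : p (p i) < p j := by
          rw [hpp]
          exact lt_of_lt_of_le hij hj'
        exact hAv (contains321_of p hij hjpi h1 h2)
      have hEcard : E.card ≤ s.card := hsMax E hE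
      -- the image of s under p is also a longest increasing subsequence
      have htInc : IsIncSubseq (⇑p) (s.image p) := by
        intro x hx y hy hxy
        obtain ⟨i, hi, rfl⟩ := Finset.mem_image.mp hx
        obtain ⟨j, hj, rfl⟩ := Finset.mem_image.mp hy
        have hij : i < j := by
          rcases lt_trichotomy i j with h | h | h
          · exact h
          · exact absurd (congrArg p h) hxy.ne
          · exact absurd (hsInc j hj i hi h) hxy.asymm
        rw [hpp, hpp]
        exact hij
      have htcard : (s.image p).card = s.card :=
        Finset.card_image_of_injective s p.injective
      have hts : s.image p = s := by
        refine huniq (s.image p) ⟨htInc, ?_⟩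
        intro u hu
        rw [htcard]
        exact hsMax u hu
      -- every element of s is a fixed point
      have hsF : ∀ i ∈ s, p i = i := by
        intro i hi
        have hpis : p i ∈ s := by
          rw [← hts]
          exact Finset.mem_image_of_mem p hi
        rcases lt_trichotomy (p i) i with h | h | h
        · have := hsInc (p i) hpis i hi h
          rw [hpp] at this
          exact absurd this h.asymm
        · exact h
        · have := hsInc i hi (p i) hpis h
          rw [hpp] at this
          exact absurd this h.asymm
      have hsE : s ⊆ E := by
        intro i hi
        rw [hEdef, Finset.mem_filter]
        exact ⟨Finset.mem_univ i, le_of_eq (hsF i hi).symm⟩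
      have hsEq : s = E := Finset.eq_of_subset_of_card_le hsE hEcard
      -- conclude p = 1
      have hfix : ∀ i, p i = i := by
        intro i
        by_cases h : i ≤ p i
        · exact hsF i (hsEq ▸ (Finset.mem_filter.mpr ⟨Finset.mem_univ i, h⟩))
        · exfalso
          push_neg at h
          have hpiE : p i ∈ E := by
            rw [hEdef, Finset.mem_filter]
            refine ⟨Finset.mem_univ _, ?_⟩
            rw [hpp]
            exact h.le
          have := hsF (p i) (hsEq ▸ hpiE)
          rw [hpp] at this
          exact absurd this.symm h.ne
      exact Equiv.ext fun i => (hfix i).trans (Equiv.Perm.one_apply i).symm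
    · rintro rfl
      refine ⟨inv_one, ?_, ?_⟩
      · rintro ⟨f, hf, hiff⟩
        have h01 : f 0 < f 1 := hf (by decide : (0 : Fin 3) < 1)
        have := (hiff 1 0).mpr (by decide : pattern321 1 < pattern321 0)
        simp only [Equiv.Perm.coe_one, id_eq] at this
        exact absurd this h01.asymm
      · refine ⟨Finset.univ, ⟨?_, fun t _ => Finset.card_le_univ t⟩, ?_⟩
        · intro i _ j _ hij
          simpa using hij
        · rintro t ⟨htInc, htMax⟩
          have h1 : (Finset.univ : Finset (Fin n)).card ≤ t.card := by
            refine htMax Finset.univ ?_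
            intro i _ j _ hij
            simpa using hij
          have h2 : t.card = Fintype.card (Fin n) :=
            le_antisymm (Finset.card_le_univ t) (by simpa using h1)
          exact Finset.eq_univ_of_card t h2
  refine ⟨main, ?_⟩
  rw [iNum, Nat.card_eq_one_iff_unique]
  constructor
  · constructor
    intro ⟨a, ha⟩ ⟨b, hb⟩
    have := ((main a).mp ha).trans ((main b).mp hb).symm
    exact Subtype.ext this
  · exact ⟨⟨1, (main 1).mpr rfl⟩⟩
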